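/- Let $Z_k$ be independent exponential random variables with rate $k$, and let $\widetilde{C}_n = \sum_{k=1}^n (Z_k - 1/k)$. Then the moment generating function of $\widetilde{C}_n$ at any $t < 1$ equals $\prod_{k=1}^n \frac{1}{1-t/k} e^{-t/k}$, and converges as $n \to \infty$ to $\Gamma(1-t) e^{-\gamma t}$, the moment generating function of a Gumbel distribution with location parameter $-\gamma$ and scale $1$. -/

import Mathlib

open MeasureTheory ProbabilityTheory Finset Filter Topology

open scoped NNReal ENNReal

set_option maxHeartbeats 1000000

private lemma exp_int_aux (r t : ℝ) (hr : 0 < r) (ht : t < r) :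
    ∫ x, Real.exp (t * x) ∂(expMeasure r) = (1 - t / r)⁻¹ := by
  have hc : (0:ℝ) < r - t := by linarith
  have hdens : expMeasure r
      = volume.withDensity (fun x => ((Real.toNNReal (exponentialPDFReal r x) : ℝ≥0) : ℝ≥0∞)) := by
    rfl
  rw [hdens, integral_withDensity_eq_integral_smul
    ((measurable_exponentialPDFReal r).real_toNNReal) _]
  have h1 : (fun x => (Real.toNNReal (exponentialPDFReal r x)) • Real.exp (t * x))
      = Set.indicator (Set.Ici (0:ℝ)) (fun x => r * Real.exp (-((r - t) * x))) := by
    funext x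
    simp only [NNReal.smul_def, Real.coe_toNNReal', Set.indicator, Set.mem_Ici]
    rw [exponentialPDFReal, gammaPDFReal]
    by_cases hx : 0 ≤ x
    · simp only [hx, if_true, Set.mem_Ici, smul_eq_mul]
      rw [max_eq_left (by positivity)]
      simp only [Real.rpow_one, Real.Gamma_one, div_one, sub_self, Real.rpow_zero, mul_one]
      rw [mul_assoc, ← Real.exp_add]
      ring_nf
    · simp [hx]
  rw [h1, integral_indicator measurableSet_Ici, integral_Ici_eq_integral_Ioi,
    MeasureTheory.integral_const_mul]
  have h2 : ∫ x in Set.Ioi (0:ℝ), Real.exp (-((r - t) * x))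
      = (r - t)⁻¹ * Real.exp (-((r-t) * 0)) := by
    have := integral_comp_mul_left_Ioi (fun u => Real.exp (-u)) 0 hc
    simp only [smul_eq_mul] at this
    rw [this, integral_exp_neg_Ioi]
  rw [h2, mul_zero, neg_zero, Real.exp_zero, mul_one]
  field_simp

private lemma prod_eq_aux (t : ℝ) (ht : t < 1) (n : ℕ) (hn : 1 ≤ n) :
    ∏ k ∈ Finset.Icc 1 n, ((1 - t / k)⁻¹ * Real.exp (-t / k))
      = Real.GammaSeq (1 - t) n * ((1 - t + n) / n)
        * Real.exp (-t * ((harmonic n : ℝ) - Real.log n)) := by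
  have hnpos : (0:ℝ) < n := by exact_mod_cast hn
  have hIcc : Finset.Icc 1 n = Finset.Ico 1 (n+1) := (Finset.Ico_add_one_right_eq_Icc 1 n).symm
  have hfac : ∀ j ∈ Finset.range n, (0:ℝ) < 1 - t + j := by
    intro j _
    have : (0:ℝ) ≤ j := Nat.cast_nonneg j
    linarith
  have hD : (0:ℝ) < ∏ j ∈ Finset.range n, (1 - t + j) := Finset.prod_pos hfac
  have hh : ((harmonic n : ℝ)) = ∑ k ∈ Finset.Icc 1 n, ((k:ℝ))⁻¹ := by
    rw [harmonic_eq_sum_Icc]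
    push_cast
    rfl
  rw [Finset.prod_mul_distrib, ← Real.exp_sum]
  have hsum : ∑ k ∈ Finset.Icc 1 n, (-t / (k:ℝ)) = -t * (harmonic n : ℝ) := by
    rw [hh, Finset.mul_sum]
    refine Finset.sum_congr rfl fun k _ => ?_
    rw [div_eq_mul_inv]
  rw [hsum]
  have hA : ∏ k ∈ Finset.Icc 1 n, ((1:ℝ) - t / k)⁻¹
      = (∏ j ∈ Finset.range n, ((j:ℝ) + 1)) / ∏ j ∈ Finset.range n, (1 - t + j) := by
    rw [hIcc, Finset.prod_Ico_eq_prod_range, ← Finset.prod_div_distrib]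
    refine Finset.prod_congr rfl fun j hj => ?_
    have hj' : ((1 + j : ℕ) : ℝ) = (j:ℝ) + 1 := by push_cast; ring
    rw [hj']
    have hne : (j:ℝ) + 1 ≠ 0 := by positivity
    have hne2 : (j:ℝ) + 1 - t ≠ 0 := by have := hfac j hj; intro h; apply absurd this; linarith
    rw [show (1:ℝ) - t + (j:ℝ) = (j:ℝ) + 1 - t by ring]
    field_simp
  have hN : (n.factorial : ℝ) = ∏ j ∈ Finset.range n, ((j:ℝ) + 1) := by
    rw [← Finset.prod_range_add_one_eq_factorial]
    push_cast
    rfl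
  have hpow : (n:ℝ) ^ ((1:ℝ) - t) = n * (Real.exp (t * Real.log n))⁻¹ := by
    rw [Real.rpow_def_of_pos hnpos, show Real.log (n:ℝ) * ((1:ℝ) - t)
      = Real.log n + -(t * Real.log n) by ring, Real.exp_add, Real.exp_log hnpos, Real.exp_neg]
  have hP : ∏ j ∈ Finset.range (n+1), ((1:ℝ) - t + (j:ℝ))
      = (∏ j ∈ Finset.range n, ((1:ℝ) - t + j)) * (1 - t + n) := by
    exact_mod_cast Finset.prod_range_succ (fun j : ℕ => (1:ℝ) - t + j) n
  have hE : Real.exp (-t * ((harmonic n : ℝ) - Real.log n))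
      = Real.exp (-t * (harmonic n : ℝ)) * Real.exp (t * Real.log n) := by
    rw [← Real.exp_add]; ring_nf
  rw [hA, Real.GammaSeq, hN, hpow, hP, hE]
  have h1 : (∏ j ∈ Finset.range n, ((1:ℝ) - t + j)) ≠ 0 := ne_of_gt hD
  have h2 : (n:ℝ) ≠ 0 := ne_of_gt hnpos
  have h3 : Real.exp (t * Real.log n) ≠ 0 := Real.exp_ne_zero _
  have h4 : (1:ℝ) - t + n ≠ 0 := ne_of_gt (by linarith)
  field_simp

/-- The MGF of `C̃_n = ∑_{k=1}^n (Z k - 1/k)` at `t < 1` equals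
`∏_{k=1}^n (1-t/k)⁻¹ e^{-t/k}`, which converges to `Γ(1-t) e^{-γ t}`, the MGF of a
Gumbel distribution with location `-γ` and scale `1`. -/
theorem stmt3
    {Ω : Type*} [MeasurableSpace Ω] (μ : Measure Ω) [IsProbabilityMeasure μ]
    (Z : ℕ → Ω → ℝ)
    (hmeas : ∀ k, Measurable (Z k))
    (hindep : iIndepFun Z μ)
    (hdist : ∀ k ≥ 1, μ.map (Z k) = expMeasure k)
    (Ctil : ℕ → Ω → ℝ) (hC : ∀ n ω, Ctil n ω = ∑ k ∈ Icc 1 n, (Z k ω - 1 / k))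
    (t : ℝ) (ht : t < 1) :
    (∀ n : ℕ, mgf (Ctil n) μ t = ∏ k ∈ Icc 1 n, (1 - t / k)⁻¹ * Real.exp (-t / k)) ∧
    Tendsto (fun n : ℕ => mgf (Ctil n) μ t) atTop
      (𝓝 (Real.Gamma (1 - t) *
        Real.exp (-Real.eulerMascheroniConstant * t))) := by
  -- the shifted variables
  set Y : ℕ → Ω → ℝ := fun k ω => Z k ω - 1 / k with hY
  have hYmeas : ∀ k, Measurable (Y k) := fun k => (hmeas k).sub measurable_const
  have hYindep : iIndepFun Y μ := by
    have := hindep.comp (fun k (x : ℝ) => x - 1 / k)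
      (fun k => measurable_id.sub measurable_const)
    exact this
  -- mgf of Z k
  have hZmgf : ∀ k : ℕ, 1 ≤ k → mgf (Z k) μ t = (1 - t / k)⁻¹ := by
    intro k hk
    have hk0 : (0:ℝ) < k := by exact_mod_cast hk
    have htk : t < k := lt_of_lt_of_le ht (by exact_mod_cast hk)
    have : mgf (Z k) μ t = ∫ x, Real.exp (t * x) ∂(μ.map (Z k)) := by
      rw [integral_map (hmeas k).aemeasurable
        (by exact (Real.continuous_exp.comp (continuous_const.mul continuous_id)).aestronglyMeasurable)]
      rfl
    rw [this, hdist k hk, exp_int_aux _ _ hk0 htk]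
  -- mgf of Y k
  have hYmgf : ∀ k : ℕ, 1 ≤ k → mgf (Y k) μ t = (1 - t / k)⁻¹ * Real.exp (-t / k) := by
    intro k hk
    have : mgf (Y k) μ t = ∫ ω, Real.exp (-t / k) * Real.exp (t * Z k ω) ∂μ := by
      unfold mgf
      refine integral_congr_ae (Eventually.of_forall fun ω => ?_)
      simp only [hY]
      rw [← Real.exp_add]
      congr 1
      ring
    rw [this, MeasureTheory.integral_const_mul, ← mgf, hZmgf k hk]
    ring
  -- part 1
  have part1 : ∀ n : ℕ, mgf (Ctil n) μ t
      = ∏ k ∈ Icc 1 n, (1 - t / k)⁻¹ * Real.exp (-t / k) := by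
    intro n
    have hfun : Ctil n = ∑ k ∈ Icc 1 n, Y k := by
      funext ω
      rw [hC]
      simp [hY, Finset.sum_apply]
    rw [hfun, hYindep.mgf_sum hYmeas (Icc 1 n)]
    refine Finset.prod_congr rfl fun k hk => ?_
    exact hYmgf k (Finset.mem_Icc.mp hk).1
  refine ⟨part1, ?_⟩
  -- part 2
  have hlim : Tendsto (fun n : ℕ => Real.GammaSeq (1 - t) n * ((1 - t + n) / n)
      * Real.exp (-t * ((harmonic n : ℝ) - Real.log n))) atTop
      (𝓝 (Real.Gamma (1 - t) * Real.exp (-Real.eulerMascheroniConstant * t))) := by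
    have h1 : Tendsto (fun n : ℕ => Real.GammaSeq (1 - t) n) atTop (𝓝 (Real.Gamma (1 - t))) :=
      Real.GammaSeq_tendsto_Gamma (1 - t)
    have h2 : Tendsto (fun n : ℕ => ((1:ℝ) - t + n) / n) atTop (𝓝 1) := by
      have h2a : Tendsto (fun n : ℕ => ((1:ℝ) - t) / n + 1) atTop (𝓝 (0 + 1)) :=
        (tendsto_const_div_atTop_nhds_zero_nat (1 - t)).add tendsto_const_nhds
      rw [zero_add] at h2a
      apply h2a.congr'
      filter_upwards [eventually_ge_atTop 1] with n hn
      have hn0 : (n:ℝ) ≠ 0 := by positivity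
      field_simp
    have h3 : Tendsto (fun n : ℕ => Real.exp (-t * ((harmonic n : ℝ) - Real.log n))) atTop
        (𝓝 (Real.exp (-t * Real.eulerMascheroniConstant))) := by
      have := Real.tendsto_harmonic_sub_log
      exact (Real.continuous_exp.tendsto _).comp (this.const_mul (-t))
    have := (h1.mul h2).mul h3
    rw [mul_one] at this
    convert this using 2
    ring_nf
  have heq : (fun n : ℕ => mgf (Ctil n) μ t) =ᶠ[atTop]
      (fun n : ℕ => Real.GammaSeq (1 - t) n * ((1 - t + n) / n)
        * Real.exp (-t * ((harmonic n : ℝ) - Real.log n))) := by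
    filter_upwards [eventually_ge_atTop 1] with n hn
    rw [part1 n, prod_eq_aux t ht n hn]
  exact hlim.congr' heq.symm
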